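/- (Derivative of σ₀, the unnumbered lemma in Section 4.4.) Let V = β₀ + β₁·t and W = γ₀ + γ₁·t be linear polynomials in 𝕜[t], where 𝕜 is a field of characteristic p. Then the formal derivative of σ₀(t) := Σ_{i=1}^{p−1} V^i·W^{p−i} satisfies σ₀′(t) = (β₀γ₁ − β₁γ₀)·(V − W)^{p−2}. (In the paper's notation this reads σ₀′(t) = −π^{1/p}(V−W)^{p−2} with π^{1/p} = β₁γ₀ − β₀γ₁.) -/

import Mathlib

open Polynomial Finset

lemma key_sum {R : Type*} [CommRing R] [IsDomain R] (p : ℕ) (hp : p.Prime) [CharP R p]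
    (v w : R) :
    ∑ i ∈ range p, (i : R) * v ^ (i - 1) * w ^ (p - 1 - i) = -(v - w) ^ (p - 2) := by
  haveI : Fact p.Prime := ⟨hp⟩
  have h1 : (∑ i ∈ range p, X ^ i * C (w ^ (p - 1 - i)) : R[X])
      = (X - C w) ^ (p - 1) := by
    have hne : (X - C w : R[X]) ≠ 0 := X_sub_C_ne_zero w
    apply mul_right_cancel₀ hne
    rw [← pow_succ, Nat.sub_add_cancel hp.one_lt.le]
    have h2 := geom_sum₂_mul (X : R[X]) (C w) p
    simp only [← C_pow] at h2 ⊢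
    rw [h2, sub_pow_char, C_pow]
  have h3 := congrArg derivative h1
  rw [derivative_sum, derivative_pow] at h3
  simp only [derivative_mul, derivative_C, derivative_X_pow, mul_zero, add_zero,
    derivative_sub, derivative_X, sub_zero, mul_one] at h3
  have hcast : ((p - 1 : ℕ) : R) = -1 := by
    rw [Nat.cast_sub hp.one_lt.le, CharP.cast_eq_zero, Nat.cast_one, zero_sub]
  rw [hcast, map_neg, C_1] at h3
  have h4 := congrArg (eval v) h3
  simp only [eval_finset_sum, eval_mul, eval_C, eval_pow, eval_X, eval_neg, eval_sub,
    eval_one, eval_natCast, neg_one_mul] at h4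
  rwa [show p - 1 - 1 = p - 2 from Nat.sub_sub p 1 1] at h4


/-- **derivative of σ₀, Section 4.4.**  Let `p` be a prime and `𝕜` a field of
characteristic `p`.  For linear polynomials `V = β₀ + β₁·t` and `W = γ₀ + γ₁·t` in `𝕜[t]`,
the formal derivative of `σ₀(t) = ∑_{i=1}^{p-1} V^i·W^{p-i}` equals
`(β₀γ₁ − β₁γ₀)·(V − W)^{p-2}`. -/
theorem derivative_sigma_zero
    (p : ℕ) (hp : p.Prime) (𝕜 : Type*) [Field 𝕜] [CharP 𝕜 p] (β₀ β₁ γ₀ γ₁ : 𝕜) :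
    derivative (∑ i ∈ Ioo 0 p,
        (C β₀ + C β₁ * X) ^ i * (C γ₀ + C γ₁ * X) ^ (p - i))
      = C (β₀ * γ₁ - β₁ * γ₀) * ((C β₀ + C β₁ * X) - (C γ₀ + C γ₁ * X)) ^ (p - 2) := by

  haveI : Fact p.Prime := ⟨hp⟩
  set V : 𝕜[X] := C β₀ + C β₁ * X with hV
  set W : 𝕜[X] := C γ₀ + C γ₁ * X with hW
  rw [derivative_sum]
  have hterm : ∀ i ∈ Ioo 0 p, derivative (V ^ i * W ^ (p - i))
      = C (β₁ * γ₀ - β₀ * γ₁) * ((i : 𝕜[X]) * V ^ (i - 1) * W ^ (p - 1 - i)) := by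
    intro i hi
    obtain ⟨hi0, hip⟩ := mem_Ioo.mp hi
    rw [derivative_mul, derivative_pow, derivative_pow]
    have hdV : derivative V = C β₁ := by simp [hV]
    have hdW : derivative W = C γ₁ := by simp [hW]
    rw [hdV, hdW]
    have hpi : ((p - i : ℕ) : 𝕜[X]) = -(i : 𝕜[X]) := by
      rw [Nat.cast_sub hip.le, CharP.cast_eq_zero, zero_sub]
    have hVi : V ^ i = V ^ (i - 1) * V := by
      rw [← pow_succ]
      congr 1
      omega
    have hWi : W ^ (p - i) = W ^ (p - 1 - i) * W := by
      rw [← pow_succ]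
      congr 1
      omega
    have key : C β₁ * W - C γ₁ * V = C (β₁ * γ₀ - β₀ * γ₁) := by
      rw [hV, hW, map_sub, map_mul, map_mul]
      ring
    simp only [C_eq_natCast]
    rw [hVi, hWi, hpi, show p - i - 1 = p - 1 - i by omega, ← key]
    ring
  rw [sum_congr rfl hterm, ← mul_sum]
  have hext : ∑ i ∈ Ioo 0 p, ((i : 𝕜[X]) * V ^ (i - 1) * W ^ (p - 1 - i))
      = ∑ i ∈ range p, ((i : 𝕜[X]) * V ^ (i - 1) * W ^ (p - 1 - i)) := by
    apply sum_subset
    · intro x hx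
      simp only [mem_Ioo] at hx
      exact mem_range.mpr hx.2
    · intro x hx hnx
      have hx0 : x = 0 := by
        simp only [mem_range] at hx
        simp only [mem_Ioo, not_and] at hnx
        omega
      simp [hx0]
  rw [hext, key_sum p hp V W]
  have hswap : (β₀ * γ₁ - β₁ * γ₀ : 𝕜) = -(β₁ * γ₀ - β₀ * γ₁) := by ring
  rw [hswap, map_neg]
  ring
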